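/- arXiv:2302.00177 — 2 statements merged into one kernel-verified Lean document; each statement's English description precedes it below -/
import Mathlib

section
/- Let W : U → ℝ be C¹ on an open set U ⊆ ℝᵏ containing 0, with W(0) = 0, and suppose the Łojasiewicz inequality |∇W(x)|² ≥ |W(x)|^α holds on U for some α ∈ (1,2). Let x : [0,∞) → U be a C¹ solution of x' = -k∇W(x) + γ(x) with k > 0, where γ : U → ℝᵏ satisfies |γ(x)| ≤ c|∇W(x)| for a constant 0 < c < k. If x(τ) → 0 as τ → ∞, then the arclength ∫₀^∞ |x'(τ)| dτ is finite. -/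
open Real Set MeasureTheory Filter

/-- Łojasiewicz finite-length theorem for a perturbed gradient flow
`x' = -k ∇W(x) + γ(x)`. -/
theorem stmt_3 {k' : ℕ} (U : Set (EuclideanSpace ℝ (Fin k')))
    (hU : IsOpen U) (h0U : (0 : EuclideanSpace ℝ (Fin k')) ∈ U)
    (W : EuclideanSpace ℝ (Fin k') → ℝ)
    (gradW : EuclideanSpace ℝ (Fin k') → EuclideanSpace ℝ (Fin k'))
    (hgrad : ∀ x ∈ U, HasGradientAt W (gradW x) x)
    (hgradcont : ContinuousOn gradW U)
    (hW0 : W 0 = 0)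
    (α : ℝ) (hα1 : 1 < α) (hα2 : α < 2)
    (hLoj : ∀ x ∈ U, ‖gradW x‖ ^ 2 ≥ |W x| ^ α)
    (k c : ℝ) (hk : 0 < k) (hc : 0 < c) (hck : c < k)
    (γ : EuclideanSpace ℝ (Fin k') → EuclideanSpace ℝ (Fin k'))
    (hγ : ∀ x ∈ U, ‖γ x‖ ≤ c * ‖gradW x‖)
    (x : ℝ → EuclideanSpace ℝ (Fin k'))
    (hxin : ∀ τ, 0 ≤ τ → x τ ∈ U)
    (hode : ∀ τ, 0 ≤ τ → HasDerivAt x (-k • gradW (x τ) + γ (x τ)) τ)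
    (hlim : Tendsto x atTop (nhds 0)) :
    IntegrableOn (fun τ => ‖-k • gradW (x τ) + γ (x τ)‖) (Ioi 0) := by
  set f : ℝ → ℝ := fun τ => W (x τ) with hfdef
  set u : ℝ → ℝ := fun τ => ‖gradW (x τ)‖ with hudef
  set v : ℝ → EuclideanSpace ℝ (Fin k') := fun τ => -k • gradW (x τ) + γ (x τ) with hvdef
  set β : ℝ := (2 - α) / 2 with hβdef
  have hβpos : (0:ℝ) < β := by rw [hβdef]; linarith
  have hβα : β - 1 + α / 2 = 0 := by rw [hβdef]; ring
  -- derivative of f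
  have hfd : ∀ τ, 0 ≤ τ → HasDerivAt f (inner ℝ (gradW (x τ)) (v τ) : ℝ) τ := by
    intro τ hτ
    have h1 := (hgrad (x τ) (hxin τ hτ)).hasFDerivAt
    have h2 := h1.comp_hasDerivAt τ (hode τ hτ)
    simpa only [Function.comp_def, InnerProductSpace.toDual_apply_apply] using h2
  -- bound on the derivative of f
  have hubd : ∀ τ, 0 ≤ τ → (inner ℝ (gradW (x τ)) (v τ) : ℝ) ≤ -((k - c) * u τ ^ 2) := by
    intro τ hτ
    have h1 : (inner ℝ (gradW (x τ)) (v τ) : ℝ)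
        = -(k * u τ ^ 2) + inner ℝ (gradW (x τ)) (γ (x τ)) := by
      simp only [hvdef, inner_add_right, inner_smul_right, real_inner_self_eq_norm_sq, hudef,
        neg_smul, inner_neg_right]
      try ring
    have h2 : (inner ℝ (gradW (x τ)) (γ (x τ)) : ℝ) ≤ u τ * (c * u τ) := by
      refine le_trans (real_inner_le_norm _ _) ?_
      exact mul_le_mul_of_nonneg_left (hγ (x τ) (hxin τ hτ)) (norm_nonneg _)
    rw [h1]
    nlinarith [h2]
  have hvnorm : ∀ τ, 0 ≤ τ → ‖v τ‖ ≤ (k + c) * u τ := by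
    intro τ hτ
    calc ‖v τ‖ ≤ ‖-k • gradW (x τ)‖ + ‖γ (x τ)‖ := norm_add_le _ _
      _ ≤ k * u τ + c * u τ := by
          refine add_le_add ?_ (hγ (x τ) (hxin τ hτ))
          rw [norm_smul]
          simp [abs_of_pos hk, hudef]
      _ = (k + c) * u τ := by ring
  -- continuity facts
  have hfc : ∀ τ, 0 ≤ τ → ContinuousAt f τ := fun τ hτ =>
    ((hgrad (x τ) (hxin τ hτ)).differentiableAt.continuousAt).comp
      (hode τ hτ).differentiableAt.continuousAt
  have huc : ∀ τ, 0 ≤ τ → ContinuousAt u τ := fun τ hτ =>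
    ((hgradcont.continuousAt (hU.mem_nhds (hxin τ hτ))).comp
      (hode τ hτ).differentiableAt.continuousAt).norm
  -- f is antitone on [0, ∞)
  have hfanti : AntitoneOn f (Ici 0) := by
    refine antitoneOn_of_deriv_nonpos (convex_Ici 0)
      (fun τ hτ => (hfc τ hτ).continuousWithinAt) ?_ ?_
    · intro τ hτ
      rw [interior_Ici] at hτ
      exact ((hfd τ hτ.le).differentiableAt).differentiableWithinAt
    · intro τ hτ
      rw [interior_Ici] at hτ
      rw [(hfd τ hτ.le).deriv]
      nlinarith [hubd τ hτ.le, sq_nonneg (u τ)]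
  -- f tends to 0
  have hflim : Tendsto f atTop (nhds 0) := by
    have := ((hgrad 0 h0U).differentiableAt.continuousAt).tendsto.comp hlim
    rwa [hW0] at this
  -- f is nonnegative on [0, ∞)
  have hfnn : ∀ τ, 0 ≤ τ → 0 ≤ f τ := by
    intro τ hτ
    refine le_of_tendsto hflim ?_
    filter_upwards [eventually_ge_atTop τ] with s hs
    exact hfanti hτ (le_trans hτ hs) hs
  -- Łojasiewicz
  have hloj' : ∀ τ, 0 ≤ τ → f τ ^ (α / 2) ≤ u τ := by
    intro τ hτ
    have h := hLoj (x τ) (hxin τ hτ)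
    have habs : |W (x τ)| = f τ := abs_of_nonneg (hfnn τ hτ)
    rw [habs] at h
    have hsq : (f τ ^ (α / 2)) ^ 2 ≤ u τ ^ 2 := by
      have : (f τ ^ (α / 2)) ^ 2 = f τ ^ α := by
        rw [← Real.rpow_natCast (f τ ^ (α / 2)) 2, ← Real.rpow_mul (hfnn τ hτ)]
        norm_num
      rw [this]
      exact h
    have h2 := Real.sqrt_le_sqrt hsq
    rwa [Real.sqrt_sq (Real.rpow_nonneg (hfnn τ hτ) _), Real.sqrt_sq (norm_nonneg _)] at h2
  -- integrability of u on compact intervals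
  have hucOn : ∀ T, 0 ≤ T → ContinuousOn u (Icc 0 T) := fun T _ r hr =>
    (huc r hr.1).continuousWithinAt
  have huint : ∀ T, 0 ≤ T → IntervalIntegrable u volume 0 T := by
    intro T hT
    apply ContinuousOn.intervalIntegrable
    rw [uIcc_of_le hT]
    exact hucOn T hT
  have huIoi : ContinuousOn u (Ioi 0) := fun r hr => (huc r (le_of_lt hr)).continuousWithinAt
  -- the key estimate
  have hkey : ∀ T, 0 ≤ T → (k - c) * β * ∫ s in (0:ℝ)..T, u s ≤ f 0 ^ β := by
    intro T hT
    obtain ⟨T₁, hT₁0, hT₁T, hpos, hzero⟩ :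
        ∃ T₁, 0 ≤ T₁ ∧ T₁ ≤ T ∧ (∀ s, 0 ≤ s → s < T₁ → 0 < f s) ∧
          (∀ s, T₁ < s → s ≤ T → u s = 0) := by
      by_cases hS : ∃ s ∈ Icc (0:ℝ) T, f s = 0
      · set S := Icc (0:ℝ) T ∩ f ⁻¹' {0} with hSdef
        have hfcOn : ContinuousOn f (Icc 0 T) := fun r hr => (hfc r hr.1).continuousWithinAt
        have hSc : IsClosed S :=
          hfcOn.preimage_isClosed_of_isClosed isClosed_Icc isClosed_singleton
        have hSne : S.Nonempty := by
          obtain ⟨s, hs1, hs2⟩ := hS; exact ⟨s, hs1, hs2⟩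
        have hSbd : BddBelow S := ⟨0, fun s hs => hs.1.1⟩
        have hmem : sInf S ∈ S := hSc.csInf_mem hSne hSbd
        set T₁ := sInf S with hT₁def
        have hfT₁ : f T₁ = 0 := hmem.2
        have hf0after : ∀ s, T₁ ≤ s → f s = 0 := by
          intro s hs
          have h1 : f s ≤ f T₁ := hfanti hmem.1.1 (le_trans hmem.1.1 hs) hs
          have h2 : 0 ≤ f s := hfnn s (le_trans hmem.1.1 hs)
          rw [hfT₁] at h1; linarith
        refine ⟨T₁, hmem.1.1, hmem.1.2, ?_, ?_⟩
        · intro s hs hsT₁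
          rcases (hfnn s hs).lt_or_eq with h | h
          · exact h
          · exact absurd (csInf_le hSbd ⟨⟨hs, le_trans hsT₁.le hmem.1.2⟩, h.symm⟩)
              (not_le.mpr hsT₁)
        · intro s hs _
          have hs0 : 0 ≤ s := le_trans hmem.1.1 hs.le
          have hev : f =ᶠ[nhds s] fun _ => (0:ℝ) := by
            filter_upwards [Ioi_mem_nhds hs] with r hr
            exact hf0after r hr.le
          have hder0 : HasDerivAt f 0 s := (hasDerivAt_const s (0:ℝ)).congr_of_eventuallyEq hev
          have heq : (inner ℝ (gradW (x s)) (v s) : ℝ) = 0 := (hfd s hs0).unique hder0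
          have hb := hubd s hs0
          rw [heq] at hb
          have hun : 0 ≤ u s := norm_nonneg _
          have h4 : u s ≤ 0 := by
            by_contra h
            push_neg at h
            nlinarith [mul_pos (mul_pos (sub_pos.mpr hck) h) h]
          exact le_antisymm h4 hun
      · push_neg at hS
        exact ⟨T, hT, le_refl T,
          fun s hs hsT => (hfnn s hs).lt_of_ne' (hS s ⟨hs, hsT.le⟩),
          fun s hs hsT => absurd hsT (not_le.mpr hs)⟩
    have hint1 : IntervalIntegrable u volume 0 T₁ := huint T₁ hT₁0
    have hint2 : IntervalIntegrable u volume T₁ T := by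
      apply ContinuousOn.intervalIntegrable
      intro r hr
      rw [uIcc_of_le hT₁T] at hr
      exact (huc r (le_trans hT₁0 hr.1)).continuousWithinAt
    have hsplit : ∫ s in (0:ℝ)..T, u s = (∫ s in (0:ℝ)..T₁, u s) + ∫ s in T₁..T, u s :=
      (intervalIntegral.integral_add_adjacent_intervals hint1 hint2).symm
    have hzero' : ∫ s in T₁..T, u s = 0 := by
      have hae : ∀ᵐ s ∂(volume : Measure ℝ), s ∈ Set.uIoc T₁ T → u s = (fun _ => (0:ℝ)) s := by
        refine Eventually.of_forall fun s hs => ?_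
        rw [uIoc_of_le hT₁T] at hs
        exact hzero s hs.1 hs.2
      rw [intervalIntegral.integral_congr_ae hae, intervalIntegral.integral_zero]
    set Φ : ℝ → ℝ := fun r => f r ^ β + (k - c) * β * ∫ s in (0:ℝ)..r, u s with hΦdef
    have hΦd : ∀ r ∈ Ioo 0 T₁, HasDerivAt Φ
        ((inner ℝ (gradW (x r)) (v r) : ℝ) * β * f r ^ (β - 1) + (k - c) * β * u r) r := by
      intro r hr
      have h1 : HasDerivAt (fun r => f r ^ β)
          ((inner ℝ (gradW (x r)) (v r) : ℝ) * β * f r ^ (β - 1)) r :=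
        (hfd r hr.1.le).rpow_const (Or.inl (hpos r hr.1.le hr.2).ne')
      have h2 : HasDerivAt (fun r => ∫ s in (0:ℝ)..r, u s) (u r) r := by
        refine intervalIntegral.integral_hasDerivAt_right (huint r hr.1.le) ?_ (huc r hr.1.le)
        exact ContinuousOn.stronglyMeasurableAtFilter isOpen_Ioi huIoi r hr.1
      exact h1.add (h2.const_mul ((k - c) * β))
    have hΦanti : AntitoneOn Φ (Icc 0 T₁) := by
      refine antitoneOn_of_deriv_nonpos (convex_Icc 0 T₁) ?_ ?_ ?_
      · apply ContinuousOn.add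
        · exact ContinuousOn.rpow_const (fun r hr => (hfc r hr.1).continuousWithinAt)
            (fun r _ => Or.inr hβpos.le)
        · apply continuousOn_const.mul
          have hi : IntegrableOn u (uIcc 0 T₁) volume := by
            rw [uIcc_of_le hT₁0]
            exact (hucOn T₁ hT₁0).integrableOn_Icc
          exact (intervalIntegral.continuousOn_primitive_interval hi).mono
            (by rw [uIcc_of_le hT₁0])
      · intro r hr
        rw [interior_Icc] at hr
        exact (hΦd r hr).differentiableAt.differentiableWithinAt
      · intro r hr
        rw [interior_Icc] at hr
        rw [(hΦd r hr).deriv]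
        have hfr : 0 < f r := hpos r hr.1.le hr.2
        have hg := hloj' r hr.1.le
        have hD := hubd r hr.1.le
        have hFβ : (0:ℝ) < f r ^ (β - 1) := Real.rpow_pos_of_pos hfr _
        have hun : 0 ≤ u r := norm_nonneg _
        have h3 : f r ^ (β - 1) * f r ^ (α / 2) = 1 := by
          rw [← Real.rpow_add hfr, hβα, Real.rpow_zero]
        have h2 : u r ≤ f r ^ (β - 1) * u r ^ 2 := by
          nlinarith [mul_le_mul_of_nonneg_right (mul_le_mul_of_nonneg_left hg hFβ.le) hun]
        have h1 : (inner ℝ (gradW (x r)) (v r) : ℝ) * β * f r ^ (β - 1)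
            ≤ -((k - c) * u r ^ 2) * β * f r ^ (β - 1) :=
          mul_le_mul_of_nonneg_right (mul_le_mul_of_nonneg_right hD hβpos.le) hFβ.le
        nlinarith [mul_le_mul_of_nonneg_left h2
          (mul_nonneg (sub_nonneg.mpr hck.le) hβpos.le)]
    have hΦle : Φ T₁ ≤ Φ 0 := hΦanti ⟨le_refl 0, hT₁0⟩ ⟨hT₁0, le_refl T₁⟩ hT₁0
    have hΦ0 : Φ 0 = f 0 ^ β := by simp [hΦdef]
    have hΦT₁ : Φ T₁ = f T₁ ^ β + (k - c) * β * ∫ s in (0:ℝ)..T₁, u s := rfl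
    have hfT₁β : 0 ≤ f T₁ ^ β := Real.rpow_nonneg (hfnn T₁ hT₁0) _
    rw [hsplit, hzero', add_zero]
    rw [hΦ0, hΦT₁] at hΦle
    linarith
  -- measurability of the integrand
  have hmeasv : AEStronglyMeasurable (fun τ => ‖v τ‖) (volume.restrict (Ioi (0:ℝ))) := by
    have h1 : Measurable fun τ => ‖deriv x τ‖ := (measurable_deriv x).norm
    refine (h1.aestronglyMeasurable.restrict).congr ?_
    rw [EventuallyEq, ae_restrict_iff' measurableSet_Ioi]
    refine Eventually.of_forall fun τ hτ => ?_
    rw [(hode τ (le_of_lt hτ)).deriv]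
  -- integrability on bounded intervals
  have hvint : ∀ T : ℝ, IntegrableOn (fun τ => ‖v τ‖) (Ioc 0 T) := by
    intro T
    rcases le_or_gt T 0 with hT | hT
    · rw [Ioc_eq_empty (not_lt.mpr hT)]
      exact integrableOn_empty
    · have hgint : IntegrableOn (fun τ => (k + c) * u τ) (Ioc 0 T) :=
        ((continuousOn_const.mul (hucOn T hT.le)).integrableOn_Icc).mono_set
          Ioc_subset_Icc_self
      refine Integrable.mono' hgint
        (hmeasv.mono_measure (Measure.restrict_mono Ioc_subset_Ioi_self le_rfl)) ?_
      rw [ae_restrict_iff' measurableSet_Ioc]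
      refine Eventually.of_forall fun τ hτ => ?_
      rw [norm_norm]
      exact hvnorm τ hτ.1.le
  -- conclusion
  refine integrableOn_Ioi_of_intervalIntegral_norm_bounded
    ((k + c) * (f 0 ^ β / ((k - c) * β))) 0 (fun i => hvint i) tendsto_id ?_
  filter_upwards [eventually_ge_atTop (0:ℝ)] with i hi
  simp only [norm_norm, id]
  have hvii : IntervalIntegrable (fun τ => ‖v τ‖) volume 0 i :=
    (intervalIntegrable_iff_integrableOn_Ioc_of_le hi).mpr (hvint i)
  have huii : IntervalIntegrable (fun τ => (k + c) * u τ) volume 0 i :=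
    (huint i hi).const_mul _
  have hmono : ∫ τ in (0:ℝ)..i, ‖v τ‖ ≤ ∫ τ in (0:ℝ)..i, (k + c) * u τ :=
    intervalIntegral.integral_mono_on hi hvii huii (fun τ hτ => hvnorm τ hτ.1)
  have hconst : ∫ τ in (0:ℝ)..i, (k + c) * u τ = (k + c) * ∫ τ in (0:ℝ)..i, u τ :=
    intervalIntegral.integral_const_mul _ _
  have hkci : (0:ℝ) < (k - c) * β := mul_pos (sub_pos.mpr hck) hβpos
  have hui : ∫ τ in (0:ℝ)..i, u τ ≤ f 0 ^ β / ((k - c) * β) := by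
    rw [le_div_iff₀ hkci]
    have := hkey i hi
    linarith
  calc ∫ τ in (0:ℝ)..i, ‖v τ‖ ≤ (k + c) * ∫ τ in (0:ℝ)..i, u τ := by rw [← hconst]; exact hmono
    _ ≤ (k + c) * (f 0 ^ β / ((k - c) * β)) :=
        mul_le_mul_of_nonneg_left hui (by linarith)
end

section
/- Consider the zero-angular-momentum connection form: along a differentiable curve s₁ : [0,∞) → ℂ with s₁(t) ≠ 0, written s₁(t) = ρ(t)e^(iψ(t)), the horizontal lift angle satisfies θ(t) - θ(0) = -∫₀ᵗ ρ(u)² ψ'(u) / (ρ(u)² + 1) du. If ρ(t) = 1/√t (for t ≥ 1) and ψ(t) = ct with c > 0, then ρ(t) → 0 as t → ∞ but θ(t) → -∞; in fact θ(t) - θ(1) ≤ -(c/2)·log t for t ≥ 1. -/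
open Real Filter intervalIntegral

/-- The infinite spin example.  For a horizontal lift the angle satisfies
`θ' = -ρ²ψ'/(ρ²+1)`, so `θ(t) - θ(1) = -∫₁ᵗ ρ²ψ'/(ρ²+1)`.  For the spiral
`ρ(t) = 1/√t`, `ψ(t) = c t` (`c > 0`), the radius tends to `0` while
`θ(t) - θ(1) ≤ -(c/2) log t`, so `θ(t) → -∞`. -/
theorem stmt_13 (θ ρ ψ ψ' : ℝ → ℝ) (c : ℝ) (hc : 0 < c)
    (hρcont : ContinuousOn ρ (Set.Ici 1))
    (hψ : ∀ t, 1 ≤ t → HasDerivAt ψ (ψ' t) t)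
    (hψ'cont : ContinuousOn ψ' (Set.Ici 1))
    (hθ : ∀ t, 1 ≤ t →
      HasDerivAt θ (-(ρ t ^ 2 * ψ' t) / (ρ t ^ 2 + 1)) t)
    (hρ : ∀ t, 1 ≤ t → ρ t = 1 / Real.sqrt t)
    (hψ' : ∀ t, 1 ≤ t → ψ' t = c) :
    (∀ t, 1 ≤ t →
        θ t - θ 1 = -∫ u in (1:ℝ)..t, ρ u ^ 2 * ψ' u / (ρ u ^ 2 + 1)) ∧
    Tendsto ρ atTop (nhds 0) ∧
    (∀ t, 1 ≤ t → θ t - θ 1 ≤ -(c / 2) * Real.log t) ∧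
    Tendsto θ atTop atBot := by
  -- integrability of the integrand on [1,t]
  have hcontf : ContinuousOn (fun u => ρ u ^ 2 * ψ' u / (ρ u ^ 2 + 1)) (Set.Ici 1) := by
    apply ContinuousOn.div
    · exact (hρcont.pow 2).mul hψ'cont
    · exact (hρcont.pow 2).add continuousOn_const
    · intro x _; positivity
  have key : ∀ t, 1 ≤ t →
      θ t - θ 1 = -∫ u in (1:ℝ)..t, ρ u ^ 2 * ψ' u / (ρ u ^ 2 + 1) := by
    intro t ht
    have huIcc : Set.uIcc (1:ℝ) t = Set.Icc 1 t := Set.uIcc_of_le ht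
    have hint : IntervalIntegrable (fun u => -(ρ u ^ 2 * ψ' u) / (ρ u ^ 2 + 1))
        MeasureTheory.volume 1 t := by
      apply ContinuousOn.intervalIntegrable
      rw [huIcc]
      have : ContinuousOn (fun u => ρ u ^ 2 * ψ' u / (ρ u ^ 2 + 1)) (Set.Icc 1 t) :=
        hcontf.mono (Set.Icc_subset_Ici_self)
      exact this.neg.congr (fun u _ => by simp only [Pi.neg_apply, neg_div])
    have := intervalIntegral.integral_eq_sub_of_hasDerivAt
      (f := θ) (f' := fun u => -(ρ u ^ 2 * ψ' u) / (ρ u ^ 2 + 1))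
      (a := 1) (b := t)
      (fun x hx => hθ x (by rw [huIcc] at hx; exact hx.1)) hint
    rw [← this]
    simp [neg_div, intervalIntegral.integral_neg]
  have hρ0 : Tendsto ρ atTop (nhds 0) := by
    have hs : Tendsto Real.sqrt atTop atTop := by
      refine (tendsto_rpow_atTop (by norm_num : (0:ℝ) < 1/2)).congr' ?_
      filter_upwards [eventually_ge_atTop (0:ℝ)] with x _
      exact (Real.sqrt_eq_rpow x).symm
    have h1 : Tendsto (fun t : ℝ => 1 / Real.sqrt t) atTop (nhds 0) := by
      have := hs.inv_tendsto_atTop; simp only [one_div]; exact this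
    refine h1.congr' ?_
    filter_upwards [eventually_ge_atTop (1:ℝ)] with t ht
    exact (hρ t ht).symm
  have hbound : ∀ t, 1 ≤ t → θ t - θ 1 ≤ -(c / 2) * Real.log t := by
    intro t ht
    rw [key t ht]
    have hI : (c / 2) * Real.log t ≤ ∫ u in (1:ℝ)..t, ρ u ^ 2 * ψ' u / (ρ u ^ 2 + 1) := by
      have hlog : (∫ u in (1:ℝ)..t, c / (2 * u)) = (c / 2) * Real.log t := by
        have : (∫ u in (1:ℝ)..t, c / (2 * u)) = (c/2) * ∫ u in (1:ℝ)..t, 1 / u := by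
          rw [← intervalIntegral.integral_const_mul]
          congr 1; ext u; ring
        rw [this, integral_one_div (by intro h; rw [Set.uIcc_of_le ht] at h; linarith [h.1]),
          div_one]
      rw [← hlog]
      apply intervalIntegral.integral_mono_on ht
      · apply ContinuousOn.intervalIntegrable
        rw [Set.uIcc_of_le ht]
        apply ContinuousOn.div continuousOn_const (continuousOn_const.mul continuousOn_id)
        intro x hx; have := hx.1; exact mul_ne_zero two_ne_zero (ne_of_gt (show (0:ℝ) < x by linarith))
      · apply ContinuousOn.intervalIntegrable
        rw [Set.uIcc_of_le ht]
        exact hcontf.mono Set.Icc_subset_Ici_self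
      · intro u hu
        have hu1 : (1:ℝ) ≤ u := hu.1
        have hu0 : (0:ℝ) < u := by linarith
        rw [hρ u hu1, hψ' u hu1]
        have hs : Real.sqrt u ^ 2 = u := Real.sq_sqrt hu0.le
        have hs0 : (0:ℝ) < Real.sqrt u := Real.sqrt_pos.mpr hu0
        rw [div_pow, one_pow, hs]
        rw [div_le_div_iff₀ (by positivity) (by positivity)]
        have hcu : c / u ≤ c := by
          rw [div_le_iff₀ hu0]; nlinarith
        have e1 : c * (1 / u + 1) = c / u + c := by ring
        have e2 : 1 / u * c * (2 * u) = 2 * c := by field_simp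
        rw [e1, e2]; linarith
    linarith
  refine ⟨key, hρ0, hbound, ?_⟩
  have h2 : Tendsto (fun t : ℝ => (c / 2) * Real.log t) atTop atTop :=
    Real.tendsto_log_atTop.const_mul_atTop (by positivity)
  have h3 : Tendsto (fun t : ℝ => θ 1 + -((c / 2) * Real.log t)) atTop atBot :=
    tendsto_atBot_add_const_left _ _ (tendsto_neg_atTop_atBot.comp h2)
  apply tendsto_atBot_mono' _ _ h3
  filter_upwards [eventually_ge_atTop (1:ℝ)] with t ht
  have := hbound t ht
  linarith [this, (by ring : -(c/2) * Real.log t = -((c/2) * Real.log t))]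
end
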